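/- Let H : ℝ⁴ → ℝ be C², let U ⊆ ℝ⁴ be open with |∇H(p)| = 1 for every p ∈ U, and set Xᵢ(p) = Aᵢ∇H(p) for i = 1,2,3. Let x : ℝ → U solve ẋ(t) = A₃∇H(x(t)) and let y : ℝ → ℝ⁴ solve the linearized equation ẏ(t) = A₃·Hess H(x(t))·y(t) with ⟨y(0), ∇H(x(0))⟩ = 0. Write aᵢ(t) = ⟨y(t), Xᵢ(x(t))⟩ and κᵢⱼ(t) = ⟨Hess H(x(t))·Xᵢ(x(t)), Xⱼ(x(t))⟩. Then a₁, a₂ satisfy ȧ₁(t) = −κ₁₂(t) a₁(t) − (κ₂₂(t)+κ₃₃(t)) a₂(t) and ȧ₂(t) = (κ₁₁(t)+κ₃₃(t)) a₁(t) + κ₁₂(t) a₂(t) for all t; equivalently (ȧ₁,ȧ₂)ᵀ = −𝕁M(a₁,a₂)ᵀ where M is the symmetric matrix with rows (κ₁₁+κ₃₃, κ₁₂) and (κ₁₂, κ₂₂+κ₃₃). -/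

import Mathlib

open Matrix

noncomputable section

/-- The quaternionic matrices A₁ = [[0,𝕁],[𝕁,0]], A₂ = [[𝕁,0],[0,−𝕁]], A₃ = [[0,I],[−I,0]],
where 𝕁 = [[0,1],[−1,0]]. -/
def A : Fin 3 → Matrix (Fin 4) (Fin 4) ℝ :=
  ![!![0,0,0,1; 0,0,-1,0; 0,1,0,0; -1,0,0,0],
    !![0,1,0,0; -1,0,0,0; 0,0,0,-1; 0,0,1,0],
    !![0,0,1,0; 0,0,0,1; -1,0,0,0; 0,-1,0,0]]

/-- The gradient of `H : ℝ⁴ → ℝ` as the vector of partial derivatives. -/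
def grad (H : (Fin 4 → ℝ) → ℝ) (p : Fin 4 → ℝ) : Fin 4 → ℝ :=
  fun i => fderiv ℝ H p (Pi.single i 1)

/-- The Hessian matrix of `H : ℝ⁴ → ℝ`. -/
def hess (H : (Fin 4 → ℝ) → ℝ) (p : Fin 4 → ℝ) : Matrix (Fin 4) (Fin 4) ℝ :=
  Matrix.of fun i j => fderiv ℝ (fun q => fderiv ℝ H q (Pi.single j 1)) p (Pi.single i 1)

/-! ### Auxiliary algebraic lemmas -/

private lemma skew (i : Fin 3) (u v : Fin 4 → ℝ) :
    ((A i).mulVec u) ⬝ᵥ v = -(u ⬝ᵥ ((A i).mulVec v)) := by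
  fin_cases i <;>
    simp [A, mulVec, dotProduct, Fin.sum_univ_four, Matrix.vecHead, Matrix.vecTail] <;> ring

private lemma A20v (v : Fin 4 → ℝ) : (A 2).mulVec ((A 0).mulVec v) = (A 1).mulVec v := by
  funext i; fin_cases i <;>
    simp [A, mulVec, dotProduct, Fin.sum_univ_four, Matrix.vecHead, Matrix.vecTail]

private lemma A00v (v : Fin 4 → ℝ) : (A 0).mulVec ((A 0).mulVec v) = -v := by
  funext i; fin_cases i <;>
    simp [A, mulVec, dotProduct, Fin.sum_univ_four, Matrix.vecHead, Matrix.vecTail]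

private lemma A01v (v : Fin 4 → ℝ) : (A 0).mulVec ((A 1).mulVec v) = (A 2).mulVec v := by
  funext i; fin_cases i <;>
    simp [A, mulVec, dotProduct, Fin.sum_univ_four, Matrix.vecHead, Matrix.vecTail]

private lemma A02v (v : Fin 4 → ℝ) : (A 0).mulVec ((A 2).mulVec v) = -((A 1).mulVec v) := by
  funext i; fin_cases i <;>
    simp [A, mulVec, dotProduct, Fin.sum_univ_four, Matrix.vecHead, Matrix.vecTail]

private lemma A10v (v : Fin 4 → ℝ) : (A 1).mulVec ((A 0).mulVec v) = -((A 2).mulVec v) := by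
  funext i; fin_cases i <;>
    simp [A, mulVec, dotProduct, Fin.sum_univ_four, Matrix.vecHead, Matrix.vecTail]

private lemma A11v (v : Fin 4 → ℝ) : (A 1).mulVec ((A 1).mulVec v) = -v := by
  funext i; fin_cases i <;>
    simp [A, mulVec, dotProduct, Fin.sum_univ_four, Matrix.vecHead, Matrix.vecTail]

private lemma A12v (v : Fin 4 → ℝ) : (A 1).mulVec ((A 2).mulVec v) = (A 0).mulVec v := by
  funext i; fin_cases i <;>
    simp [A, mulVec, dotProduct, Fin.sum_univ_four, Matrix.vecHead, Matrix.vecTail]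

private lemma A21v (v : Fin 4 → ℝ) : (A 2).mulVec ((A 1).mulVec v) = -((A 0).mulVec v) := by
  funext i; fin_cases i <;>
    simp [A, mulVec, dotProduct, Fin.sum_univ_four, Matrix.vecHead, Matrix.vecTail]

private lemma symdot (S : Matrix (Fin 4) (Fin 4) ℝ) (hsym : ∀ i j, S i j = S j i)
    (u v : Fin 4 → ℝ) : (S.mulVec u) ⬝ᵥ v = u ⬝ᵥ (S.mulVec v) := by
  simp only [dotProduct, mulVec, Fin.sum_univ_four]
  rw [hsym 1 0, hsym 2 0, hsym 3 0, hsym 2 1, hsym 3 1, hsym 3 2]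
  ring

private lemma transfer (S : Matrix (Fin 4) (Fin 4) ℝ) (hsym : ∀ i j, S i j = S j i)
    (Y w : Fin 4 → ℝ) :
    ((A 2 * S).mulVec Y) ⬝ᵥ w = -(Y ⬝ᵥ (S.mulVec ((A 2).mulVec w))) := by
  simp only [dotProduct, mulVec, Matrix.mul_apply, Fin.sum_univ_four]
  simp [A, Matrix.vecHead, Matrix.vecTail]
  rw [hsym 1 0, hsym 2 0, hsym 3 0, hsym 2 1, hsym 3 1, hsym 3 2]
  ring

private lemma complete_frame (g : Fin 4 → ℝ) (hgg : g ⬝ᵥ g = 1) (u v : Fin 4 → ℝ) :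
    u ⬝ᵥ v = (u ⬝ᵥ g) * (v ⬝ᵥ g)
      + (u ⬝ᵥ (A 0).mulVec g) * (v ⬝ᵥ (A 0).mulVec g)
      + (u ⬝ᵥ (A 1).mulVec g) * (v ⬝ᵥ (A 1).mulVec g)
      + (u ⬝ᵥ (A 2).mulVec g) * (v ⬝ᵥ (A 2).mulVec g) := by
  simp only [A, dotProduct, mulVec, Fin.sum_univ_four, Matrix.cons_val_zero, Matrix.cons_val_one,
    Matrix.head_cons, Matrix.cons_val_two, Matrix.tail_cons, Matrix.cons_val_three,
    Matrix.cons_val', Matrix.empty_val', Matrix.cons_val_fin_one, Matrix.head_fin_const,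
    Matrix.of_apply] at hgg ⊢
  linear_combination -(u 0 * v 0 + u 1 * v 1 + u 2 * v 2 + u 3 * v 3) * hgg

private lemma alg_const (S : Matrix (Fin 4) (Fin 4) ℝ) (hsym : ∀ i j, S i j = S j i)
    (Y g : Fin 4 → ℝ) :
    ((A 2 * S).mulVec Y) ⬝ᵥ g + Y ⬝ᵥ (S.mulVec ((A 2).mulVec g)) = 0 := by
  rw [transfer S hsym Y g]; ring

private lemma alg_main0 (S : Matrix (Fin 4) (Fin 4) ℝ) (g Y : Fin 4 → ℝ)
    (hsym : ∀ i j, S i j = S j i)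
    (hSg : S.mulVec g = 0) (hgg : g ⬝ᵥ g = 1) (hYg : Y ⬝ᵥ g = 0) :
    ((A 2 * S).mulVec Y) ⬝ᵥ ((A 0).mulVec g)
      + Y ⬝ᵥ ((A 0).mulVec (S.mulVec ((A 2).mulVec g)))
    = -((S.mulVec ((A 0).mulVec g)) ⬝ᵥ ((A 1).mulVec g)) * (Y ⬝ᵥ ((A 0).mulVec g))
      - ((S.mulVec ((A 1).mulVec g)) ⬝ᵥ ((A 1).mulVec g)
         + (S.mulVec ((A 2).mulVec g)) ⬝ᵥ ((A 2).mulVec g)) * (Y ⬝ᵥ ((A 1).mulVec g)) := by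
  have hK : ∀ w : Fin 4 → ℝ, (S.mulVec w) ⬝ᵥ g = 0 := fun w => by
    rw [symdot S hsym w g, hSg, dotProduct_zero]
  have κsym : ∀ w z : Fin 4 → ℝ, (S.mulVec w) ⬝ᵥ z = (S.mulVec z) ⬝ᵥ w := fun w z => by
    rw [symdot S hsym w z, dotProduct_comm]
  set X0 := (A 0).mulVec g with hX0
  set X1 := (A 1).mulVec g with hX1
  set X2 := (A 2).mulVec g with hX2
  set w := S.mulVec X2 with hw
  have t1 : ((A 2 * S).mulVec Y) ⬝ᵥ X0 = -(Y ⬝ᵥ (S.mulVec X1)) := by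
    rw [transfer S hsym Y X0, hX0, A20v]
  have c1 : Y ⬝ᵥ (S.mulVec X1) =
      (Y ⬝ᵥ X0) * ((S.mulVec X1) ⬝ᵥ X0) + (Y ⬝ᵥ X1) * ((S.mulVec X1) ⬝ᵥ X1)
        + (Y ⬝ᵥ X2) * ((S.mulVec X1) ⬝ᵥ X2) := by
    rw [complete_frame g hgg Y (S.mulVec X1), hYg, hK X1]; ring
  have e_0 : ((A 0).mulVec w) ⬝ᵥ X0 = 0 := by
    rw [skew 0 w X0, hX0, A00v, dotProduct_neg, neg_neg, hw, hK X2]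
  have e_1 : ((A 0).mulVec w) ⬝ᵥ X1 = -(w ⬝ᵥ X2) := by
    rw [skew 0 w X1, hX1, A01v, ← hX2]
  have e_2 : ((A 0).mulVec w) ⬝ᵥ X2 = w ⬝ᵥ X1 := by
    rw [skew 0 w X2, hX2, A02v, dotProduct_neg, ← hX1, neg_neg]
  have c2 : Y ⬝ᵥ ((A 0).mulVec w) =
      (Y ⬝ᵥ X1) * (-(w ⬝ᵥ X2)) + (Y ⬝ᵥ X2) * (w ⬝ᵥ X1) := by
    rw [complete_frame g hgg Y ((A 0).mulVec w), hYg, e_0, e_1, e_2]; ring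
  rw [t1, c2, c1, hw, κsym X1 X0, κsym X2 X1]
  ring

private lemma alg_main1 (S : Matrix (Fin 4) (Fin 4) ℝ) (g Y : Fin 4 → ℝ)
    (hsym : ∀ i j, S i j = S j i)
    (hSg : S.mulVec g = 0) (hgg : g ⬝ᵥ g = 1) (hYg : Y ⬝ᵥ g = 0) :
    ((A 2 * S).mulVec Y) ⬝ᵥ ((A 1).mulVec g)
      + Y ⬝ᵥ ((A 1).mulVec (S.mulVec ((A 2).mulVec g)))
    = ((S.mulVec ((A 0).mulVec g)) ⬝ᵥ ((A 0).mulVec g)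
        + (S.mulVec ((A 2).mulVec g)) ⬝ᵥ ((A 2).mulVec g)) * (Y ⬝ᵥ ((A 0).mulVec g))
      + ((S.mulVec ((A 0).mulVec g)) ⬝ᵥ ((A 1).mulVec g)) * (Y ⬝ᵥ ((A 1).mulVec g)) := by
  have hK : ∀ w : Fin 4 → ℝ, (S.mulVec w) ⬝ᵥ g = 0 := fun w => by
    rw [symdot S hsym w g, hSg, dotProduct_zero]
  have κsym : ∀ w z : Fin 4 → ℝ, (S.mulVec w) ⬝ᵥ z = (S.mulVec z) ⬝ᵥ w := fun w z => by
    rw [symdot S hsym w z, dotProduct_comm]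
  set X0 := (A 0).mulVec g with hX0
  set X1 := (A 1).mulVec g with hX1
  set X2 := (A 2).mulVec g with hX2
  set w := S.mulVec X2 with hw
  have t1 : ((A 2 * S).mulVec Y) ⬝ᵥ X1 = Y ⬝ᵥ (S.mulVec X0) := by
    rw [transfer S hsym Y X1, hX1, A21v, Matrix.mulVec_neg, dotProduct_neg, neg_neg, ← hX0]
  have c1 : Y ⬝ᵥ (S.mulVec X0) =
      (Y ⬝ᵥ X0) * ((S.mulVec X0) ⬝ᵥ X0) + (Y ⬝ᵥ X1) * ((S.mulVec X0) ⬝ᵥ X1)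
        + (Y ⬝ᵥ X2) * ((S.mulVec X0) ⬝ᵥ X2) := by
    rw [complete_frame g hgg Y (S.mulVec X0), hYg, hK X0]; ring
  have e_0 : ((A 1).mulVec w) ⬝ᵥ X0 = w ⬝ᵥ X2 := by
    rw [skew 1 w X0, hX0, A10v, dotProduct_neg, ← hX2, neg_neg]
  have e_1 : ((A 1).mulVec w) ⬝ᵥ X1 = 0 := by
    rw [skew 1 w X1, hX1, A11v, dotProduct_neg, neg_neg, hw, hK X2]
  have e_2 : ((A 1).mulVec w) ⬝ᵥ X2 = -(w ⬝ᵥ X0) := by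
    rw [skew 1 w X2, hX2, A12v, ← hX0]
  have c2 : Y ⬝ᵥ ((A 1).mulVec w) =
      (Y ⬝ᵥ X0) * (w ⬝ᵥ X2) + (Y ⬝ᵥ X2) * (-(w ⬝ᵥ X0)) := by
    rw [complete_frame g hgg Y ((A 1).mulVec w), hYg, e_0, e_1, e_2]; ring
  rw [t1, c2, c1, hw, κsym X2 X0]
  ring

/-! ### Auxiliary analytic lemmas -/

private lemma fderiv2_symm {H : (Fin 4 → ℝ) → ℝ} (hH : ContDiff ℝ 2 H) (p : Fin 4 → ℝ)
    (v w : Fin 4 → ℝ) :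
    fderiv ℝ (fderiv ℝ H) p v w = fderiv ℝ (fderiv ℝ H) p w v :=
  second_derivative_symmetric (fun y => (hH.differentiable (by norm_num) y).hasFDerivAt)
    (((hH.fderiv_right (m := 1) (by norm_num)).differentiable one_ne_zero p).hasFDerivAt) v w

private lemma hess_apply {H : (Fin 4 → ℝ) → ℝ} (hH : ContDiff ℝ 2 H) (p : Fin 4 → ℝ)
    (i j : Fin 4) :
    hess H p i j = fderiv ℝ (fderiv ℝ H) p (Pi.single i 1) (Pi.single j 1) := by
  have hd : DifferentiableAt ℝ (fderiv ℝ H) p :=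
    (hH.fderiv_right (m := 1) (by norm_num)).differentiable one_ne_zero p
  show fderiv ℝ (fun q => fderiv ℝ H q (Pi.single j 1)) p (Pi.single i 1) = _
  rw [fderiv_clm_apply hd (differentiableAt_const _)]
  simp

private lemma hess_symm {H : (Fin 4 → ℝ) → ℝ} (hH : ContDiff ℝ 2 H) (p : Fin 4 → ℝ)
    (i j : Fin 4) : hess H p i j = hess H p j i := by
  rw [hess_apply hH, hess_apply hH, fderiv2_symm hH]

private lemma vec_expand (v : Fin 4 → ℝ) :
    v = ∑ j : Fin 4, v j • (Pi.single j 1 : Fin 4 → ℝ) := by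
  funext i
  simp [Finset.sum_apply, Pi.single_apply]

private lemma hess_mulVec_eq {H : (Fin 4 → ℝ) → ℝ} (hH : ContDiff ℝ 2 H) (p v : Fin 4 → ℝ)
    (k : Fin 4) :
    fderiv ℝ (fderiv ℝ H) p v (Pi.single k 1) = ((hess H p).mulVec v) k := by
  rw [fderiv2_symm hH]
  conv_lhs => rw [vec_expand v]
  rw [map_sum]
  simp only [_root_.map_smul]
  simp only [mulVec, dotProduct, hess_apply hH, smul_eq_mul]
  exact Finset.sum_congr rfl fun j _ => mul_comm _ _

private lemma hasDerivAt_grad {H : (Fin 4 → ℝ) → ℝ} (hH : ContDiff ℝ 2 H)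
    {x : ℝ → Fin 4 → ℝ} {v : Fin 4 → ℝ} {t : ℝ} (hx : HasDerivAt x v t) (k : Fin 4) :
    HasDerivAt (fun s => grad H (x s) k) (((hess H (x t)).mulVec v) k) t := by
  have hd : DifferentiableAt ℝ (fderiv ℝ H) (x t) :=
    (hH.fderiv_right (m := 1) (by norm_num)).differentiable one_ne_zero (x t)
  have h2 : HasDerivAt (fun s => fderiv ℝ H (x s)) (fderiv ℝ (fderiv ℝ H) (x t) v) t :=
    hd.hasFDerivAt.comp_hasDerivAt t hx
  have h3 := h2.clm_apply (hasDerivAt_const t (Pi.single k (1:ℝ)))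
  simp only [map_zero, add_zero] at h3
  rw [← hess_mulVec_eq hH]
  exact h3

private lemma hess_grad {H : (Fin 4 → ℝ) → ℝ} (hH : ContDiff ℝ 2 H) {U : Set (Fin 4 → ℝ)}
    (hU : IsOpen U) (hgrad : ∀ p ∈ U, grad H p ⬝ᵥ grad H p = 1) {p : Fin 4 → ℝ} (hp : p ∈ U) :
    (hess H p).mulVec (grad H p) = 0 := by
  have hd : DifferentiableAt ℝ (fderiv ℝ H) p :=
    (hH.fderiv_right (m := 1) (by norm_num)).differentiable one_ne_zero p
  have h1 : HasFDerivAt (fderiv ℝ H) (fderiv ℝ (fderiv ℝ H) p) p := hd.hasFDerivAt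
  have hk : ∀ k : Fin 4, HasFDerivAt (fun q => fderiv ℝ H q (Pi.single k 1))
      ((fderiv ℝ (fderiv ℝ H) p).flip (Pi.single k 1)) p := by
    intro k
    have := h1.clm_apply (hasFDerivAt_const (Pi.single k (1:ℝ)) p)
    simpa using this
  set L : (Fin 4 → ℝ) →L[ℝ] ℝ := ∑ k : Fin 4,
      (fderiv ℝ H p (Pi.single k 1) • (fderiv ℝ (fderiv ℝ H) p).flip (Pi.single k 1)
        + fderiv ℝ H p (Pi.single k 1) • (fderiv ℝ (fderiv ℝ H) p).flip (Pi.single k 1)) with hL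
  have hF : HasFDerivAt (fun q => grad H q ⬝ᵥ grad H q) L p := by
    have heq : (fun q => grad H q ⬝ᵥ grad H q)
        = fun q => ∑ k : Fin 4, fderiv ℝ H q (Pi.single k 1) * fderiv ℝ H q (Pi.single k 1) := by
      funext q; simp [grad, dotProduct]
    rw [heq, hL]
    exact HasFDerivAt.fun_sum fun k _ => (hk k).mul (hk k)
  have hL0 : L = 0 := by
    have heq : (fun q => grad H q ⬝ᵥ grad H q) =ᶠ[nhds p] fun _ => (1:ℝ) := by
      filter_upwards [hU.mem_nhds hp] with q hq using hgrad q hq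
    have h2 : fderiv ℝ (fun q => grad H q ⬝ᵥ grad H q) p = fderiv ℝ (fun _ => (1:ℝ)) p :=
      heq.fderiv_eq
    rw [fderiv_fun_const] at h2
    rw [← hF.fderiv, h2]
    rfl
  funext j
  have hLj : L (Pi.single j 1) = 0 := by rw [hL0]; rfl
  rw [hL] at hLj
  simp only [ContinuousLinearMap.sum_apply, ContinuousLinearMap.add_apply,
    ContinuousLinearMap.smul_apply, ContinuousLinearMap.flip_apply, smul_eq_mul] at hLj
  have hexp : ((hess H p).mulVec (grad H p)) j
      = ∑ k : Fin 4, fderiv ℝ (fderiv ℝ H) p (Pi.single j 1) (Pi.single k 1)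
          * fderiv ℝ H p (Pi.single k 1) := by
    simp only [mulVec, dotProduct, hess_apply hH, grad]
  rw [hexp]
  simp only [Pi.zero_apply]
  rw [Fin.sum_univ_four] at hLj ⊢
  linarith

private lemma hasDerivAt_dot {y g : ℝ → Fin 4 → ℝ} {y' g' : Fin 4 → ℝ} {t : ℝ}
    (hy : ∀ j, HasDerivAt (fun s => y s j) (y' j) t)
    (hg : ∀ k, HasDerivAt (fun s => g s k) (g' k) t)
    (M : Matrix (Fin 4) (Fin 4) ℝ) :
    HasDerivAt (fun s => y s ⬝ᵥ M.mulVec (g s))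
      (y' ⬝ᵥ M.mulVec (g t) + y t ⬝ᵥ M.mulVec g') t := by
  have heq : (fun s => y s ⬝ᵥ M.mulVec (g s))
      = fun s => ∑ j : Fin 4, ∑ k : Fin 4, M j k * (y s j * g s k) := by
    funext s
    simp only [dotProduct, mulVec, Fin.sum_univ_four]
    ring
  have h2 : y' ⬝ᵥ M.mulVec (g t) + y t ⬝ᵥ M.mulVec g'
      = ∑ j : Fin 4, ∑ k : Fin 4, M j k * (y' j * g t k + y t j * g' k) := by
    simp only [dotProduct, mulVec, Fin.sum_univ_four]
    ring
  rw [heq, h2]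
  exact HasDerivAt.fun_sum fun j _ => HasDerivAt.fun_sum fun k _ =>
    ((hy j).mul (hg k)).const_mul (M j k)

/-- Along a Hamiltonian trajectory `x` in the unit-gradient region, a solution `y` of the
linearized flow, tangent to the energy level, has transverse components
`aᵢ = ⟨y, Aᵢ∇H(x)⟩` satisfying `(ȧ₁,ȧ₂)ᵀ = −𝕁 M (a₁,a₂)ᵀ`. -/
theorem stmt_0
    (H : (Fin 4 → ℝ) → ℝ) (hH : ContDiff ℝ 2 H)
    (U : Set (Fin 4 → ℝ)) (hU : IsOpen U)
    (hgrad : ∀ p ∈ U, dotProduct (grad H p) (grad H p) = 1)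
    (x : ℝ → Fin 4 → ℝ) (hxU : ∀ t, x t ∈ U)
    (hx : ∀ t, HasDerivAt x ((A 2).mulVec (grad H (x t))) t)
    (y : ℝ → Fin 4 → ℝ)
    (hy : ∀ t, HasDerivAt y ((A 2 * hess H (x t)).mulVec (y t)) t)
    (hy0 : dotProduct (y 0) (grad H (x 0)) = 0)
    (a : Fin 3 → ℝ → ℝ)
    (ha : ∀ i t, a i t = dotProduct (y t) ((A i).mulVec (grad H (x t))))
    (κ : Fin 3 → Fin 3 → ℝ → ℝ)
    (hκ : ∀ i j t, κ i j t =
      dotProduct ((hess H (x t)).mulVec ((A i).mulVec (grad H (x t))))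
        ((A j).mulVec (grad H (x t)))) :
    ∀ t : ℝ,
      HasDerivAt (a 0) (-(κ 0 1 t) * a 0 t - (κ 1 1 t + κ 2 2 t) * a 1 t) t ∧
      HasDerivAt (a 1) ((κ 0 0 t + κ 2 2 t) * a 0 t + κ 0 1 t * a 1 t) t := by
  have hS : ∀ t : ℝ, ∀ i j, hess H (x t) i j = hess H (x t) j i := fun t => hess_symm hH (x t)
  have hyc : ∀ t : ℝ, ∀ j, HasDerivAt (fun s => y s j)
      (((A 2 * hess H (x t)).mulVec (y t)) j) t := fun t => hasDerivAt_pi.1 (hy t)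
  have hgc : ∀ t : ℝ, ∀ k, HasDerivAt (fun s => grad H (x s) k)
      (((hess H (x t)).mulVec ((A 2).mulVec (grad H (x t)))) k) t :=
    fun t k => hasDerivAt_grad hH (hx t) k
  have hSg : ∀ t : ℝ, (hess H (x t)).mulVec (grad H (x t)) = 0 :=
    fun t => hess_grad hH hU hgrad (hxU t)
  have hyg : ∀ t : ℝ, y t ⬝ᵥ grad H (x t) = 0 := by
    have hd0 : ∀ s : ℝ, HasDerivAt (fun r => y r ⬝ᵥ grad H (x r)) 0 s := by
      intro s
      have h := hasDerivAt_dot (hyc s) (hgc s) (1 : Matrix (Fin 4) (Fin 4) ℝ)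
      simp only [Matrix.one_mulVec] at h
      rwa [alg_const (hess H (x s)) (hS s) (y s) (grad H (x s))] at h
    intro t
    calc y t ⬝ᵥ grad H (x t) = y 0 ⬝ᵥ grad H (x 0) :=
          is_const_of_deriv_eq_zero (fun s => (hd0 s).differentiableAt)
            (fun s => (hd0 s).deriv) t 0
      _ = 0 := hy0
  intro t
  constructor
  · have h := hasDerivAt_dot (hyc t) (hgc t) (A 0)
    rw [alg_main0 (hess H (x t)) (grad H (x t)) (y t) (hS t) (hSg t) (hgrad (x t) (hxU t))
      (hyg t)] at h
    have hfun : a 0 = fun s => y s ⬝ᵥ (A 0).mulVec (grad H (x s)) := funext (ha 0)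
    rw [hfun, hκ 0 1, hκ 1 1, hκ 2 2, ha 1]
    exact h
  · have h := hasDerivAt_dot (hyc t) (hgc t) (A 1)
    rw [alg_main1 (hess H (x t)) (grad H (x t)) (y t) (hS t) (hSg t) (hgrad (x t) (hxU t))
      (hyg t)] at h
    have hfun : a 1 = fun s => y s ⬝ᵥ (A 1).mulVec (grad H (x s)) := funext (ha 1)
    rw [hfun, hκ 0 0, hκ 2 2, hκ 0 1, ha 0]
    exact h
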